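/- Let q₁ be a random variable taking values in [0,1] and q₂ a random variable with E[q₁ | q₂] = q₂ almost surely. Then E[H₂(q₁)] + (2/ln 2)·E[(q₁ - q₂)²] ≤ E[H₂(q₂)], where H₂ is the binary entropy function (extended by H₂(0) = H₂(1) = 0). -/

import Mathlib

open scoped Classical

section Aux

open Real Set

lemma binEnt_eq' (x : ℝ) : -(x * Real.logb 2 x) - (1 - x) * Real.logb 2 (1 - x)
    = Real.binEntropy x / Real.log 2 := by
  unfold Real.binEntropy Real.logb
  rw [Real.log_inv, Real.log_inv]
  ring

lemma psi_mono : MonotoneOn (fun t : ℝ => log t - log (1 - t) - 4 * t) (Ioo 0 1) := by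
  apply monotoneOn_of_deriv_nonneg (convex_Ioo 0 1)
  · apply ContinuousOn.sub (ContinuousOn.sub ?_ ?_) (by fun_prop)
    · exact Real.continuousOn_log.mono (by intro x hx; exact ne_of_gt hx.1)
    · apply ContinuousOn.log (by fun_prop)
      intro x hx; exact ne_of_gt (by linarith [hx.2] : (0:ℝ) < 1 - x)
  · rw [interior_Ioo]
    intro x hx
    have h1 : (1:ℝ) - x ≠ 0 := ne_of_gt (by linarith [hx.2])
    have hd : HasDerivAt (fun t : ℝ => log t - log (1 - t) - 4 * t)
        (x⁻¹ - (1 - x)⁻¹ * (-1) - 4) x := by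
      have hlog1 : HasDerivAt (fun t : ℝ => log (1 - t)) ((1 - x)⁻¹ * (-1)) x := by
        exact (Real.hasDerivAt_log h1).comp x (((hasDerivAt_id x).const_sub 1))
      have h4 : HasDerivAt (fun t : ℝ => 4 * t) 4 x := by
        simpa using (hasDerivAt_id x).const_mul 4
      exact ((Real.hasDerivAt_log (ne_of_gt hx.1)).sub hlog1).sub h4
    exact hd.differentiableAt.differentiableWithinAt
  · rw [interior_Ioo]
    intro x hx
    have h0 : (0:ℝ) < x := hx.1
    have h1 : (0:ℝ) < 1 - x := by linarith [hx.2]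
    have hd : HasDerivAt (fun t : ℝ => log t - log (1 - t) - 4 * t)
        (x⁻¹ - (1 - x)⁻¹ * (-1) - 4) x := by
      have hlog1 : HasDerivAt (fun t : ℝ => log (1 - t)) ((1 - x)⁻¹ * (-1)) x :=
        (Real.hasDerivAt_log (ne_of_gt h1)).comp x (((hasDerivAt_id x).const_sub 1))
      have h4 : HasDerivAt (fun t : ℝ => 4 * t) 4 x := by
        simpa using (hasDerivAt_id x).const_mul 4
      exact ((Real.hasDerivAt_log (ne_of_gt h0)).sub hlog1).sub h4
    rw [hd.deriv]
    have e0 : x * x⁻¹ = 1 := mul_inv_cancel₀ (ne_of_gt h0)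
    have e1 : (1 - x) * (1 - x)⁻¹ = 1 := mul_inv_cancel₀ (ne_of_gt h1)
    nlinarith [sq_nonneg (2*x - 1), mul_pos h0 h1, sq_nonneg (x⁻¹ - (1-x)⁻¹),
      mul_pos (inv_pos.mpr h0) (inv_pos.mpr h1)]

lemma key_ineq {c q : ℝ} (hc0 : 0 < c) (hc1 : c < 1) (hq0 : 0 ≤ q) (hq1 : q ≤ 1) :
    Real.binEntropy q + 2 * (q - c) ^ 2
      ≤ Real.binEntropy c + (log (1 - c) - log c) * (q - c) := by
  set L : ℝ := log (1 - c) - log c with hLdef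
  set φ : ℝ → ℝ := fun x =>
    binEntropy c + L * (x - c) - binEntropy x - 2 * (x - c) ^ 2 with hφ
  have hφc : φ c = 0 := by simp [hφ]
  have hcont : Continuous φ := by
    apply Continuous.sub
    apply Continuous.sub
    · fun_prop
    · exact binEntropy_continuous
    · fun_prop
  have hder : ∀ x ∈ Ioo (0:ℝ) 1, HasDerivAt φ
      ((log x - log (1 - x) - 4 * x) - (log c - log (1 - c) - 4 * c)) x := by
    intro x hx
    have h1 : HasDerivAt (fun x : ℝ => binEntropy c + L * (x - c)) L x := by
      simpa using (((hasDerivAt_id' (𝕜 := ℝ) x)).sub_const c).const_mul L |>.const_add (binEntropy c)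
    have h2 := Real.hasDerivAt_binEntropy (ne_of_gt hx.1) (ne_of_lt hx.2)
    have h3 : HasDerivAt (fun x : ℝ => 2 * (x - c) ^ 2) (4 * (x - c)) x := by
      have := (((hasDerivAt_id' (𝕜 := ℝ) x)).sub_const c).pow 2 |>.const_mul 2
      refine this.congr_deriv ?_
      ring
    have := (h1.sub h2).sub h3
    refine this.congr_deriv ?_
    rw [hLdef]; ring
  rcases le_total q c with h | h
  · have anti : AntitoneOn φ (Icc 0 c) := by
      apply antitoneOn_of_deriv_nonpos (convex_Icc 0 c) hcont.continuousOn
      · rw [interior_Icc]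
        intro x hx
        exact ((hder x ⟨hx.1, lt_trans hx.2 hc1⟩).differentiableAt).differentiableWithinAt
      · rw [interior_Icc]
        intro x hx
        have hx' : x ∈ Ioo (0:ℝ) 1 := ⟨hx.1, lt_trans hx.2 hc1⟩
        rw [(hder x hx').deriv]
        have hψ : log x - log (1 - x) - 4 * x ≤ log c - log (1 - c) - 4 * c :=
          psi_mono hx' ⟨hc0, hc1⟩ hx.2.le
        linarith
    have h0 : φ c ≤ φ q := anti ⟨hq0, h⟩ ⟨hc0.le, le_refl c⟩ h
    rw [hφc] at h0
    simp only [hφ] at h0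
    linarith
  · have mono : MonotoneOn φ (Icc c 1) := by
      apply monotoneOn_of_deriv_nonneg (convex_Icc c 1) hcont.continuousOn
      · rw [interior_Icc]
        intro x hx
        exact ((hder x ⟨lt_trans hc0 hx.1, hx.2⟩).differentiableAt).differentiableWithinAt
      · rw [interior_Icc]
        intro x hx
        have hx' : x ∈ Ioo (0:ℝ) 1 := ⟨lt_trans hc0 hx.1, hx.2⟩
        rw [(hder x hx').deriv]
        have hψ : log c - log (1 - c) - 4 * c ≤ log x - log (1 - x) - 4 * x :=
          psi_mono ⟨hc0, hc1⟩ hx' hx.1.le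
        linarith
    have h0 : φ c ≤ φ q := mono ⟨le_refl c, hc1.le⟩ ⟨h, hq1⟩ h
    rw [hφc] at h0
    simp only [hφ] at h0
    linarith

end Aux

/-- Binary entropy function (base 2), extended by `binEnt 0 = binEnt 1 = 0`
(automatic since `Real.logb 2 0 = 0`). -/
noncomputable def binEnt (p : ℝ) : ℝ :=
  -(p * Real.logb 2 p) - (1 - p) * Real.logb 2 (1 - p)

/-- If q₁ ∈ [0,1] and E[q₁ | q₂] = q₂ a.s. (on a finite probability space),
then E[H₂(q₁)] + (2/ln 2)·E[(q₁ - q₂)²] ≤ E[H₂(q₂)]. -/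
theorem stmt1 {Ω : Type} [Fintype Ω] (p : Ω → ℝ) (hp : ∀ ω, 0 ≤ p ω)
    (hsum : ∑ ω, p ω = 1)
    (q₁ q₂ : Ω → ℝ) (hq₁ : ∀ ω, q₁ ω ∈ Set.Icc (0 : ℝ) 1)
    (hcond : ∀ c : ℝ,
      (∑ ω, if q₂ ω = c then p ω * q₁ ω else 0) = c * ∑ ω, if q₂ ω = c then p ω else 0) :
    (∑ ω, p ω * binEnt (q₁ ω)) + (2 / Real.log 2) * ∑ ω, p ω * (q₁ ω - q₂ ω) ^ 2
      ≤ ∑ ω, p ω * binEnt (q₂ ω) := by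
  classical
  have claim : ∀ ω, 0 < p ω → (q₂ ω ∈ Set.Ioo (0:ℝ) 1 ∨ q₁ ω = q₂ ω) := by
    intro ω hω
    set c := q₂ ω with hc
    have hMnn : ∀ ω' ∈ Finset.univ (α := Ω), 0 ≤ (if q₂ ω' = c then p ω' else 0) := by
      intro ω' _; split_ifs; exacts [hp ω', le_refl 0]
    have hSnn : ∀ ω' ∈ Finset.univ (α := Ω), 0 ≤ (if q₂ ω' = c then p ω' * q₁ ω' else 0) := by
      intro ω' _; split_ifs
      exacts [mul_nonneg (hp ω') (hq₁ ω').1, le_refl 0]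
    have hM : 0 < ∑ ω', if q₂ ω' = c then p ω' else 0 := by
      apply Finset.sum_pos' hMnn
      exact ⟨ω, Finset.mem_univ ω, by simp [hc, hω]⟩
    have hS0 : 0 ≤ ∑ ω', if q₂ ω' = c then p ω' * q₁ ω' else 0 :=
      Finset.sum_nonneg hSnn
    have hSle : (∑ ω', if q₂ ω' = c then p ω' * q₁ ω' else 0)
        ≤ ∑ ω', if q₂ ω' = c then p ω' else 0 := by
      apply Finset.sum_le_sum
      intro ω' _; split_ifs
      · calc p ω' * q₁ ω' ≤ p ω' * 1 :=
            mul_le_mul_of_nonneg_left (hq₁ ω').2 (hp ω')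
          _ = p ω' := mul_one _
      · exact le_refl 0
    have hc0 : 0 ≤ c := by
      by_contra hcon
      push_neg at hcon
      have := mul_neg_of_neg_of_pos hcon hM
      rw [← hcond c] at this
      linarith
    have hc1 : c ≤ 1 := by
      by_contra hcon
      push_neg at hcon
      nlinarith [hcond c, hM, hSle]
    rcases eq_or_lt_of_le hc0 with h0 | h0
    · -- c = 0 : q₁ ω = 0
      right
      have hSeq : (∑ ω', if q₂ ω' = c then p ω' * q₁ ω' else 0) = 0 := by
        rw [hcond c, ← h0]; ring
      have := (Finset.sum_eq_zero_iff_of_nonneg hSnn).mp hSeq ω (Finset.mem_univ ω)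
      simp only [if_pos hc.symm] at this
      have hq0 : q₁ ω = 0 := by
        rcases mul_eq_zero.mp this with h | h
        · exact absurd h (ne_of_gt hω)
        · exact h
      rw [hq0, ← h0]
    rcases eq_or_lt_of_le hc1 with h1 | h1
    · -- c = 1 : q₁ ω = 1
      right
      have hTnn : ∀ ω' ∈ Finset.univ (α := Ω),
          0 ≤ (if q₂ ω' = c then p ω' * (1 - q₁ ω') else 0) := by
        intro ω' _; split_ifs
        exacts [mul_nonneg (hp ω') (by linarith [(hq₁ ω').2]), le_refl 0]
      have hTeq : (∑ ω', if q₂ ω' = c then p ω' * (1 - q₁ ω') else 0) = 0 := by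
        have expand : (∑ ω', if q₂ ω' = c then p ω' * (1 - q₁ ω') else 0)
            = (∑ ω', if q₂ ω' = c then p ω' else 0)
              - (∑ ω', if q₂ ω' = c then p ω' * q₁ ω' else 0) := by
          rw [← Finset.sum_sub_distrib]
          apply Finset.sum_congr rfl
          intro ω' _; split_ifs <;> ring
        rw [expand, hcond c, h1]; ring
      have := (Finset.sum_eq_zero_iff_of_nonneg hTnn).mp hTeq ω (Finset.mem_univ ω)
      simp only [if_pos hc.symm] at this
      have hq1' : q₁ ω = 1 := by
        rcases mul_eq_zero.mp this with h | h
        · exact absurd h (ne_of_gt hω)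
        · linarith
      rw [hq1', ← h1]
    · exact Or.inl ⟨h0, h1⟩
  -- pointwise inequality (natural log scale)
  have key : ∀ ω, p ω * Real.binEntropy (q₁ ω) + 2 * (p ω * (q₁ ω - q₂ ω) ^ 2)
      ≤ p ω * Real.binEntropy (q₂ ω)
        + p ω * ((Real.log (1 - q₂ ω) - Real.log (q₂ ω)) * (q₁ ω - q₂ ω)) := by
    intro ω
    rcases eq_or_lt_of_le (hp ω) with h0 | h0
    · simp [← h0]
    rcases claim ω h0 with hio | heq
    · have hk := key_ineq hio.1 hio.2 (hq₁ ω).1 (hq₁ ω).2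
      nlinarith [mul_le_mul_of_nonneg_left hk h0.le]
    · rw [heq]; simp
  -- the linear part sums to zero, by grouping over fibers of q₂
  have lin : ∑ ω, p ω * ((Real.log (1 - q₂ ω) - Real.log (q₂ ω)) * (q₁ ω - q₂ ω)) = 0 := by
    rw [← Finset.sum_fiberwise_of_maps_to
      (fun ω _ => Finset.mem_image_of_mem q₂ (Finset.mem_univ ω))
      (fun ω => p ω * ((Real.log (1 - q₂ ω) - Real.log (q₂ ω)) * (q₁ ω - q₂ ω)))]
    apply Finset.sum_eq_zero
    intro c _
    have step : (∑ ω ∈ Finset.univ.filter (fun ω => q₂ ω = c),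
          p ω * ((Real.log (1 - q₂ ω) - Real.log (q₂ ω)) * (q₁ ω - q₂ ω)))
        = (Real.log (1 - c) - Real.log c) *
            (∑ ω ∈ Finset.univ.filter (fun ω => q₂ ω = c), p ω * q₁ ω)
          - ((Real.log (1 - c) - Real.log c) * c) *
            (∑ ω ∈ Finset.univ.filter (fun ω => q₂ ω = c), p ω) := by
      rw [Finset.mul_sum, Finset.mul_sum, ← Finset.sum_sub_distrib]
      apply Finset.sum_congr rfl
      intro ω hω
      have hq2 : q₂ ω = c := (Finset.mem_filter.mp hω).2
      rw [hq2]; ring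
    rw [step]
    have e1 : (∑ ω ∈ Finset.univ.filter (fun ω => q₂ ω = c), p ω * q₁ ω)
        = ∑ ω, if q₂ ω = c then p ω * q₁ ω else 0 := Finset.sum_filter _ _
    have e2 : (∑ ω ∈ Finset.univ.filter (fun ω => q₂ ω = c), p ω)
        = ∑ ω, if q₂ ω = c then p ω else 0 := Finset.sum_filter _ _
    rw [e1, e2, hcond c]; ring
  -- natural-log-scale inequality
  have NAT : (∑ ω, p ω * Real.binEntropy (q₁ ω)) + 2 * ∑ ω, p ω * (q₁ ω - q₂ ω) ^ 2
      ≤ ∑ ω, p ω * Real.binEntropy (q₂ ω) := by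
    have h1 := Finset.sum_le_sum (fun ω (_ : ω ∈ Finset.univ) => key ω)
    rw [Finset.sum_add_distrib, Finset.sum_add_distrib, ← Finset.mul_sum, lin] at h1
    linarith
  -- convert to base-2
  have hlog2 : (0:ℝ) < Real.log 2 := Real.log_pos one_lt_two
  have e : ∀ b : Ω → ℝ, ∑ ω, p ω * binEnt (b ω)
      = (∑ ω, p ω * Real.binEntropy (b ω)) / Real.log 2 := by
    intro b
    rw [Finset.sum_div]
    exact Finset.sum_congr rfl fun ω _ => by
      simp only [binEnt, binEnt_eq', mul_div_assoc]
  rw [e q₁, e q₂]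
  have e3 : 2 / Real.log 2 * ∑ ω, p ω * (q₁ ω - q₂ ω) ^ 2
      = (2 * ∑ ω, p ω * (q₁ ω - q₂ ω) ^ 2) / Real.log 2 := by ring
  rw [e3, ← add_div]
  gcongr
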